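/- arXiv:1607.00749 — 2 statements merged into one kernel-verified Lean document; each statement's English description precedes it below -/
import Mathlib

section
/- Let A be a commutative ring with an ℕ-indexed internal grading, and let Γ be a connective graded A-module. Suppose that for every index set I the canonical comparison map Γ ⊗_A ∏_{i∈I} A → ∏_{i∈I} Γ, sending x ⊗ (aᵢ)ᵢ to (aᵢ • x)ᵢ, is surjective. Then Γ has finite-type generators: there exists a set S of homogeneous elements of Γ generating Γ as an A-module with only finitely many elements of S in each degree. -/
open scoped TensorProduct

noncomputable section

universe u v w

/-- The canonical comparison map `Γ ⊗[A] (∏ i, M i) → ∏ i, (Γ ⊗[A] M i)`,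
sending `x ⊗ (mᵢ)ᵢ` to `(x ⊗ mᵢ)ᵢ`. -/
def comparisonMap (A : Type u) [CommRing A] (Γ : Type v) [AddCommGroup Γ] [Module A Γ]
    {I : Type w} (M : I → Type*) [∀ i, AddCommGroup (M i)] [∀ i, Module A (M i)] :
    (Γ ⊗[A] (∀ i, M i)) →ₗ[A] ∀ i, Γ ⊗[A] M i :=
  LinearMap.pi fun i => LinearMap.lTensor Γ (LinearMap.proj i)

/-- The canonical comparison map `Γ ⊗[A] (∏ i ∈ I, A) → ∏ i ∈ I, Γ`,
sending `x ⊗ (aᵢ)ᵢ` to `(aᵢ • x)ᵢ`. -/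
def comparisonMapPow (A : Type u) [CommRing A] (Γ : Type v) [AddCommGroup Γ] [Module A Γ]
    (I : Type w) :
    (Γ ⊗[A] (I → A)) →ₗ[A] (I → Γ) :=
  LinearMap.pi fun i =>
    (TensorProduct.rid A Γ).toLinearMap ∘ₗ LinearMap.lTensor Γ (LinearMap.proj i)

/-- `x` is a homogeneous element for the grading `ℳ`. -/
def IsHomogeneous {M : Type v} [AddCommGroup M] (ℳ : ℕ → AddSubgroup M) (x : M) : Prop :=
  ∃ n, x ∈ ℳ n

/-- A graded module has *finite-type generators* if it is generated, as an `A`-module, by a set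
of homogeneous elements having only finitely many elements in each degree. -/
def HasFiniteTypeGenerators (A : Type u) [CommRing A] {M : Type v} [AddCommGroup M] [Module A M]
    (ℳ : ℕ → AddSubgroup M) : Prop :=
  ∃ S : Set M, (∀ s ∈ S, IsHomogeneous ℳ s) ∧ Submodule.span A S = ⊤ ∧
    ∀ n, (S ∩ (ℳ n : Set M)).Finite

/-- A submodule `K` of a graded module has *finite-type generators* (for the grading inherited
from the ambient module) if it is generated, as an `A`-module, by a set of homogeneous elements
of the ambient module, lying in `K`, with only finitely many elements in each degree. -/
def SubmoduleHasFiniteTypeGenerators (A : Type u) [CommRing A] {M : Type v} [AddCommGroup M]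
    [Module A M] (ℳ : ℕ → AddSubgroup M) (K : Submodule A M) : Prop :=
  ∃ S : Set M, S ⊆ (K : Set M) ∧ (∀ s ∈ S, IsHomogeneous ℳ s) ∧ Submodule.span A S = K ∧
    ∀ n, (S ∩ (ℳ n : Set M)).Finite

/-- A graded module is *finite-type free* if it admits a basis of homogeneous elements with
only finitely many basis elements in each degree. -/
def IsFiniteTypeFree (A : Type u) [CommRing A] {F : Type v} [AddCommGroup F] [Module A F]
    (ℱ : ℕ → AddSubgroup F) : Prop :=
  ∃ (J : Type v) (b : Module.Basis J A F) (d : J → ℕ),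
    (∀ j, b j ∈ ℱ (d j)) ∧ ∀ n, {j | d j = n}.Finite

/-- The degree-`n` component of the connective graded free `A`-module `⨁ j, Σ^{d j} A`,
realized concretely on `J →₀ A`: the `j`-th coordinate of a degree-`n` element is a
homogeneous element of `A` of degree `n - d j` (and vanishes if `d j > n`). -/
def gradedFreeSubgroup {A : Type u} [CommRing A] (𝒜 : ℕ → AddSubgroup A) {J : Type w}
    (d : J → ℕ) (n : ℕ) : AddSubgroup (J →₀ A) where
  carrier := {f | ∀ j, f j ∈ 𝒜 (n - d j) ∧ (d j ≤ n ∨ f j = 0)}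
  zero_mem' := by
    intro j
    refine ⟨by simpa using zero_mem (𝒜 (n - d j)), Or.inr (by simp)⟩
  add_mem' := by
    intro a b ha hb j
    refine ⟨by simpa using add_mem (ha j).1 (hb j).1, ?_⟩
    rcases (ha j).2 with h | h
    · exact Or.inl h
    · rcases (hb j).2 with h' | h'
      · exact Or.inl h'
      · exact Or.inr (by simp [h, h'])
  neg_mem' := by
    intro a ha j
    refine ⟨by simpa using neg_mem (ha j).1, ?_⟩
    rcases (ha j).2 with h | h
    · exact Or.inl h
    · exact Or.inr (by simp [h])

/-- A connective graded `A`-module `Γ` is *finite-type* if there is a finite-type free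
connective graded `A`-module `F₀` (concretely realized as `J →₀ A`, with `J` having finitely
many elements in each degree) together with a surjective degree-preserving `A`-linear map
`p : F₀ → Γ` whose kernel has finite-type generators (for the inherited grading). -/
def IsFiniteType (A : Type u) [CommRing A] (𝒜 : ℕ → AddSubgroup A) {Γ : Type v}
    [AddCommGroup Γ] [Module A Γ] (ℳ : ℕ → AddSubgroup Γ) : Prop :=
  ∃ (J : Type) (d : J → ℕ) (p : (J →₀ A) →ₗ[A] Γ),
    (∀ n, {j | d j = n}.Finite) ∧ Function.Surjective p ∧
    (∀ n, ∀ f ∈ gradedFreeSubgroup 𝒜 d n, p f ∈ ℳ n) ∧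
    SubmoduleHasFiniteTypeGenerators A (gradedFreeSubgroup 𝒜 d) (LinearMap.ker p)
/-- If `Γ` is a connective graded module over the connective graded commutative
ring `A` such that for every index set `I` the canonical comparison map
`Γ ⊗[A] ∏ᵢ A → ∏ᵢ Γ`, `x ⊗ (aᵢ)ᵢ ↦ (aᵢ • x)ᵢ`, is surjective, then `Γ` has finite-type
generators: a generating set of homogeneous elements with only finitely many in each degree. -/
theorem hasFiniteTypeGenerators_of_comparisonMapPow_surjective
    {A : Type u} [CommRing A] (𝒜 : ℕ → AddSubgroup A) [GradedRing 𝒜]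
    {Γ : Type u} [AddCommGroup Γ] [Module A Γ] (ℳ : ℕ → AddSubgroup Γ)
    [DirectSum.Decomposition ℳ] [SetLike.GradedSMul 𝒜 ℳ]
    (h : ∀ (I : Type u), Function.Surjective (comparisonMapPow A Γ I)) :
    HasFiniteTypeGenerators A ℳ := by
  classical
  obtain ⟨x, hx⟩ := h Γ (fun γ => γ)
  obtain ⟨S, rfl⟩ := TensorProduct.exists_finset x
  have hgen : ∀ γ : Γ, γ = ∑ i ∈ S, i.2 γ • i.1 := by
    intro γ
    have h1 := congrFun hx γ
    simp only [comparisonMapPow, map_sum, LinearMap.pi_apply, LinearMap.comp_apply,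
      LinearEquiv.coe_coe, LinearMap.lTensor_tmul, LinearMap.proj_apply,
      TensorProduct.rid_tmul, Finset.sum_apply] at h1
    exact h1.symm
  set T : Finset Γ := S.image Prod.fst with hT
  have hTspan : ∀ γ : Γ, γ ∈ Submodule.span A (T : Set Γ) := by
    intro γ
    rw [hgen γ]
    exact Submodule.sum_mem _ fun i hi => Submodule.smul_mem _ _
      (Submodule.subset_span (Finset.mem_image_of_mem Prod.fst hi))
  set S' : Set Γ := ⋃ g ∈ (T : Set Γ),
      (fun n => (DirectSum.decompose ℳ g n : Γ)) '' ((DirectSum.decompose ℳ g).support : Set ℕ)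
    with hS'
  have hfin : S'.Finite :=
    Set.Finite.biUnion T.finite_toSet fun g _ => (Set.toFinite _).image _
  refine ⟨S', ?_, ?_, ?_⟩
  · rintro s hs
    simp only [hS', Set.mem_iUnion, Set.mem_image] at hs
    obtain ⟨g, -, n, -, rfl⟩ := hs
    exact ⟨n, SetLike.coe_mem _⟩
  · rw [eq_top_iff]
    intro γ _
    refine Submodule.span_le.2 ?_ (hTspan γ)
    intro g hg
    rw [← DirectSum.sum_support_decompose ℳ g]
    refine Submodule.sum_mem _ fun n hn => Submodule.subset_span ?_
    simp only [hS', Set.mem_iUnion]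
    exact ⟨g, hg, Set.mem_image_of_mem _ (by simpa using hn)⟩
  · exact fun n => hfin.subset Set.inter_subset_left
end
end

section
/- Let A be a commutative ring with an ℕ-indexed internal grading, and let Γ be a connective graded A-module. Suppose that for every index set I the canonical comparison map Γ ⊗_A ∏_{i∈I} A → ∏_{i∈I} Γ, sending x ⊗ (aᵢ)ᵢ to (aᵢ • x)ᵢ, is bijective. Then Γ is finite-type as a graded A-module: there exists a finite-type free connective graded A-module F₀ and a surjective degree-preserving A-linear map p : F₀ → Γ whose kernel has finite-type generators. -/
open scoped TensorProduct

noncomputable section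

universe u v w

/- AUXILIARY LEMMAS -/

lemma aux_sum_shift {M : Type*} [AddCommMonoid M] (e : ℕ) (g : ℕ → M) :
    ∀ M', ∑ n ∈ Finset.range (e + M'), (if e ≤ n then g (n - e) else 0) =
      ∑ k ∈ Finset.range M', g k := by
  intro M'
  induction M' with
  | zero =>
    simp only [Nat.add_zero, Finset.range_zero, Finset.sum_empty]
    apply Finset.sum_eq_zero
    intro n hn
    rw [if_neg]
    exact Nat.not_le.mpr (Finset.mem_range.mp hn)
  | succ M ih =>
    rw [← Nat.add_assoc, Finset.sum_range_succ, Finset.sum_range_succ, ih,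
      if_pos (Nat.le_add_right e M), Nat.add_sub_cancel_left]

/-- The degree-`n` homogeneous component of an element of `J →₀ A`. -/
def gcomp {A : Type u} [CommRing A] (𝒜 : ℕ → AddSubgroup A) [GradedRing 𝒜] {J : Type w}
    (d : J → ℕ) (n : ℕ) (f : J →₀ A) : J →₀ A :=
  Finsupp.onFinset f.support
    (fun j => if d j ≤ n then ((DirectSum.decompose 𝒜 (f j)) (n - d j) : A) else 0)
    (fun j hj => by
      rw [Finsupp.mem_support_iff]
      intro hf
      apply hj
      show (if d j ≤ n then ((DirectSum.decompose 𝒜 (f j)) (n - d j) : A) else 0) = 0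
      rw [hf]
      simp)

lemma gcomp_apply {A : Type u} [CommRing A] (𝒜 : ℕ → AddSubgroup A) [GradedRing 𝒜] {J : Type w}
    (d : J → ℕ) (n : ℕ) (f : J →₀ A) (j : J) :
    gcomp 𝒜 d n f j = if d j ≤ n then ((DirectSum.decompose 𝒜 (f j)) (n - d j) : A) else 0 :=
  rfl

lemma gcomp_mem {A : Type u} [CommRing A] (𝒜 : ℕ → AddSubgroup A) [GradedRing 𝒜] {J : Type w}
    (d : J → ℕ) (n : ℕ) (f : J →₀ A) :
    gcomp 𝒜 d n f ∈ gradedFreeSubgroup 𝒜 d n := by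
  intro j
  constructor
  · rw [gcomp_apply]
    split
    · exact SetLike.coe_mem _
    · exact zero_mem _
  · rw [gcomp_apply]
    by_cases hdj : d j ≤ n
    · exact Or.inl hdj
    · exact Or.inr (if_neg hdj)

lemma sum_gcomp {A : Type u} [CommRing A] (𝒜 : ℕ → AddSubgroup A) [GradedRing 𝒜] {J : Type w}
    (d : J → ℕ) (f : J →₀ A) :
    ∃ N : ℕ, ∑ n ∈ Finset.range N, gcomp 𝒜 d n f = f := by
  classical
  refine ⟨f.support.sup
    (fun j => d j + (((DirectSum.decompose 𝒜 (f j)).support.sup id) + 1)), ?_⟩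
  set N := f.support.sup
    (fun j => d j + (((DirectSum.decompose 𝒜 (f j)).support.sup id) + 1)) with hN
  ext j
  rw [Finsupp.finset_sum_apply]
  simp only [gcomp_apply]
  by_cases hj : j ∈ f.support
  · have hle : d j + (((DirectSum.decompose 𝒜 (f j)).support.sup id) + 1) ≤ N := by
      rw [hN]
      exact Finset.le_sup (f := fun j =>
        d j + (((DirectSum.decompose 𝒜 (f j)).support.sup id) + 1)) hj
    have hdj : d j ≤ N := le_trans (Nat.le_add_right _ _) hle
    have hNe : N = d j + (N - d j) := (Nat.add_sub_cancel' hdj).symm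
    rw [hNe, aux_sum_shift (d j) (fun k => ((DirectSum.decompose 𝒜 (f j)) k : A)) (N - d j)]
    have hsub : (DirectSum.decompose 𝒜 (f j)).support ⊆ Finset.range (N - d j) := by
      intro k hk
      have hk2 : id k ≤ (DirectSum.decompose 𝒜 (f j)).support.sup id :=
        Finset.le_sup (f := id) hk
      simp only [id] at hk2
      rw [Finset.mem_range]
      omega
    rw [← Finset.sum_subset hsub (fun k _ hk => by
      rw [DFinsupp.notMem_support_iff.mp hk]
      simp)]
    exact DirectSum.sum_support_decompose 𝒜 (f j)
  · rw [Finsupp.notMem_support_iff.mp hj]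
    simp

lemma homog_comp_eq_zero {Γ : Type v} [AddCommGroup Γ] (ℳ : ℕ → AddSubgroup Γ)
    [DirectSum.Decomposition ℳ] {N : ℕ} (m : ℕ → Γ) (hm : ∀ n, m n ∈ ℳ n)
    (hs : ∑ n ∈ Finset.range N, m n = 0) : ∀ n₀ ∈ Finset.range N, m n₀ = 0 := by
  classical
  intro n₀ hn₀
  have h := congrArg (DirectSum.decompose ℳ) hs
  rw [DirectSum.decompose_sum, DirectSum.decompose_zero] at h
  have h2 : ∑ n ∈ Finset.range N, ((DirectSum.decompose ℳ (m n)) n₀) = 0 := by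
    have h3 := congrArg (fun z : DirectSum ℕ (fun n => ℳ n) => z n₀) h
    simp only [DirectSum.zero_apply] at h3
    rw [← h3, DFinsupp.finset_sum_apply]
  rw [Finset.sum_eq_single_of_mem n₀ hn₀ (fun n _ hne => by
    rw [DirectSum.decompose_of_mem ℳ (hm n)]
    exact DirectSum.of_eq_of_ne _ _ _ hne.symm)] at h2
  rw [DirectSum.decompose_of_mem ℳ (hm n₀), DirectSum.of_eq_same] at h2
  simpa using congrArg Subtype.val h2

lemma linearCombination_gradedFree_mem {A : Type u} [CommRing A] (𝒜 : ℕ → AddSubgroup A)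
    [GradedRing 𝒜] {Γ : Type v} [AddCommGroup Γ] [Module A Γ] (ℳ : ℕ → AddSubgroup Γ)
    [SetLike.GradedSMul 𝒜 ℳ] {J : Type w} (d : J → ℕ) (v : J → Γ)
    (hv : ∀ j, v j ∈ ℳ (d j)) (n : ℕ) (f : J →₀ A) (hf : f ∈ gradedFreeSubgroup 𝒜 d n) :
    Finsupp.linearCombination A v f ∈ ℳ n := by
  rw [Finsupp.linearCombination_apply, Finsupp.sum]
  apply AddSubgroup.sum_mem
  intro j _
  rcases (hf j).2 with hdj | hfj
  · have hsm := SetLike.GradedSMul.smul_mem (hf j).1 (hv j)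
    have heq : (n - d j) +ᵥ d j = n := by
      rw [vadd_eq_add]
      omega
    rwa [heq] at hsm
  · rw [hfj, zero_smul]
    exact zero_mem _

lemma comparison_naturality {A : Type u} [CommRing A] {M : Type v} {N : Type v}
    [AddCommGroup M] [AddCommGroup N] [Module A M] [Module A N] (φ : M →ₗ[A] N)
    (I : Type w) (t : M ⊗[A] (I → A)) :
    comparisonMapPow A N I (LinearMap.rTensor (I → A) φ t) =
      fun i => φ (comparisonMapPow A M I t i) := by
  induction t with
  | zero =>
    funext i
    simp
  | tmul x a =>
    funext i
    show (a i) • φ x = φ ((a i) • x)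
    rw [map_smul]
  | add s t hs ht =>
    funext i
    simp only [map_add, Pi.add_apply, hs, ht]

/-- If `Γ` is a connective graded module over the connective graded commutative
ring `A` such that for every index set `I` the canonical comparison map
`Γ ⊗[A] ∏ᵢ A → ∏ᵢ Γ`, `x ⊗ (aᵢ)ᵢ ↦ (aᵢ • x)ᵢ`, is bijective, then `Γ` is finite-type: there
is a finite-type free connective graded `A`-module `F₀` and a surjective degree-preserving
`A`-linear map `p : F₀ → Γ` whose kernel has finite-type generators. -/
theorem isFiniteType_of_comparisonMapPow_bijective
    {A : Type u} [CommRing A] (𝒜 : ℕ → AddSubgroup A) [GradedRing 𝒜]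
    {Γ : Type u} [AddCommGroup Γ] [Module A Γ] (ℳ : ℕ → AddSubgroup Γ)
    [DirectSum.Decomposition ℳ] [SetLike.GradedSMul 𝒜 ℳ]
    (h : ∀ (I : Type u), Function.Bijective (comparisonMapPow A Γ I)) :
    IsFiniteType A 𝒜 ℳ := by
  classical
  -- Step A: a finite spanning set of Γ, from surjectivity of the comparison map
  obtain ⟨t, ht⟩ := (h Γ).2 (fun γ => γ)
  obtain ⟨S, rfl⟩ := TensorProduct.exists_finset t
  have hspan : Submodule.span A (Prod.fst '' (S : Set (Γ × (Γ → A)))) = ⊤ := by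
    rw [eq_top_iff]
    rintro γ -
    have h1 : comparisonMapPow A Γ Γ (∑ i ∈ S, i.1 ⊗ₜ[A] i.2) γ = γ := congrFun ht γ
    rw [map_sum, Finset.sum_apply] at h1
    rw [← h1]
    apply Submodule.sum_mem
    intro i hi
    exact Submodule.smul_mem _ _ (Submodule.subset_span
      (Set.mem_image_of_mem _ (Finset.mem_coe.mpr hi)))
  -- Step B: a finite homogeneous spanning family
  have hTfin : (Prod.fst '' (S : Set (Γ × (Γ → A)))).Finite := S.finite_toSet.image _
  set G : Set Γ := ⋃ x ∈ Prod.fst '' (S : Set (Γ × (Γ → A))),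
    (fun n => ((DirectSum.decompose ℳ x) n : Γ)) '' ↑(DirectSum.decompose ℳ x).support with hG
  have hGfin : G.Finite := hTfin.biUnion (fun x _ => (Finset.finite_toSet _).image _)
  have hGhom : ∀ g ∈ G, ∃ n, g ∈ ℳ n := by
    intro g hg
    simp only [hG, Set.mem_iUnion, Set.mem_image] at hg
    obtain ⟨x, -, n, -, rfl⟩ := hg
    exact ⟨n, SetLike.coe_mem _⟩
  have hGspan : Submodule.span A G = ⊤ := by
    rw [eq_top_iff, ← hspan]
    apply Submodule.span_le.mpr
    intro x hx
    rw [SetLike.mem_coe, ← DirectSum.sum_support_decompose ℳ x]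
    apply Submodule.sum_mem
    intro n hn
    apply Submodule.subset_span
    simp only [hG, Set.mem_iUnion]
    exact ⟨x, hx, Set.mem_image_of_mem _ hn⟩
  obtain ⟨m, v, -, hvG⟩ := hGfin.fin_param
  have hvhom : ∀ j, ∃ n, v j ∈ ℳ n := fun j => hGhom _ (hvG ▸ Set.mem_range_self j)
  choose d hd using hvhom
  have hsurj : Function.Surjective (Finsupp.linearCombination A v) := by
    rw [← LinearMap.range_eq_top, Finsupp.range_linearCombination, hvG]
    exact hGspan
  have hdeg : ∀ n, ∀ f ∈ gradedFreeSubgroup 𝒜 d n, Finsupp.linearCombination A v f ∈ ℳ n :=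
    fun n f hf => linearCombination_gradedFree_mem 𝒜 ℳ d v hd n f hf
  refine ⟨Fin m, d, Finsupp.linearCombination A v, fun n => Set.toFinite _, hsurj, hdeg, ?_⟩
  -- Step C: the kernel is finitely generated
  set K := LinearMap.ker (Finsupp.linearCombination A v) with hK
  set t₀ : (Fin m →₀ A) ⊗[A] (↥K → A) :=
    ∑ j : Fin m, Finsupp.single j (1 : A) ⊗ₜ[A] (fun k => (k : Fin m →₀ A) j) with ht₀def
  have ht₀ : ∀ k : ↥K, comparisonMapPow A (Fin m →₀ A) ↥K t₀ k = (k : Fin m →₀ A) := by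
    intro k
    have hterm : ∀ j : Fin m, comparisonMapPow A (Fin m →₀ A) ↥K
        (Finsupp.single j (1 : A) ⊗ₜ[A] (fun k' : ↥K => (k' : Fin m →₀ A) j)) k
        = Finsupp.single j ((k : Fin m →₀ A) j) := by
      intro j
      show ((k : Fin m →₀ A) j) • Finsupp.single j (1 : A) = _
      rw [Finsupp.smul_single, smul_eq_mul, mul_one]
    rw [ht₀def, map_sum, Finset.sum_apply]
    simp only [hterm]
    ext j'
    rw [Finsupp.finset_sum_apply]
    simp [Finsupp.single_apply]
  have hrT : LinearMap.rTensor (↥K → A) (Finsupp.linearCombination A v) t₀ = 0 := by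
    apply (h ↥K).1
    rw [map_zero, comparison_naturality]
    funext k
    simp only [Pi.zero_apply]
    rw [ht₀ k]
    exact LinearMap.mem_ker.mp k.2
  have hex : Function.Exact
      (LinearMap.rTensor (↥K → A) K.subtype)
      (LinearMap.rTensor (↥K → A) (Finsupp.linearCombination A v)) :=
    rTensor_exact _ (LinearMap.exact_subtype_ker_map _) hsurj
  obtain ⟨s, hs⟩ := (hex t₀).mp hrT
  have hsK : ∀ k : ↥K, comparisonMapPow A ↥K ↥K s k = k := by
    intro k
    have hnat := congrFun (comparison_naturality (M := ↥K) (N := Fin m →₀ A) K.subtype ↥K s) k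
    rw [hs] at hnat
    exact Subtype.ext (hnat.symm.trans (ht₀ k))
  obtain ⟨Z, rfl⟩ := TensorProduct.exists_finset s
  have hKspan : Submodule.span A (K.subtype '' (Prod.fst '' (Z : Set (↥K × (↥K → A))))) = K := by
    have htop : Submodule.span A (Prod.fst '' (Z : Set (↥K × (↥K → A)))) = (⊤ : Submodule A ↥K) := by
      rw [eq_top_iff]
      rintro k -
      have h1 := hsK k
      rw [map_sum, Finset.sum_apply] at h1
      rw [← h1]
      apply Submodule.sum_mem
      intro i hi
      exact Submodule.smul_mem _ _ (Submodule.subset_span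
        (Set.mem_image_of_mem _ (Finset.mem_coe.mpr hi)))
    rw [← Submodule.map_span K.subtype, htop, Submodule.map_top, Submodule.range_subtype]
  -- Step D: homogeneous finite-type generators for the kernel
  have hZ'fin : (K.subtype '' (Prod.fst '' (Z : Set (↥K × (↥K → A))))).Finite :=
    (Z.finite_toSet.image _).image _
  obtain ⟨mz, w, -, hwZ'⟩ := hZ'fin.fin_param
  have hwK : ∀ i, w i ∈ K := by
    intro i
    have : w i ∈ K.subtype '' (Prod.fst '' (Z : Set (↥K × (↥K → A)))) :=
      hwZ' ▸ Set.mem_range_self i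
    obtain ⟨k, -, hk⟩ := this
    exact hk ▸ k.2
  choose Nw hNw using fun i => sum_gcomp 𝒜 d (w i)
  have hcompK : ∀ i, ∀ n ∈ Finset.range (Nw i), gcomp 𝒜 d n (w i) ∈ K := by
    intro i
    have hzero : ∑ n ∈ Finset.range (Nw i),
        Finsupp.linearCombination A v (gcomp 𝒜 d n (w i)) = 0 := by
      rw [← map_sum, hNw i]
      exact LinearMap.mem_ker.mp (hwK i)
    intro n hn
    exact LinearMap.mem_ker.mpr (homog_comp_eq_zero ℳ _
      (fun n' => hdeg n' _ (gcomp_mem 𝒜 d n' (w i))) hzero n hn)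
  refine ⟨⋃ i : Fin mz, (fun n => gcomp 𝒜 d n (w i)) '' ↑(Finset.range (Nw i)), ?_, ?_, ?_, ?_⟩
  · intro x hx
    simp only [Set.mem_iUnion, Set.mem_image, Finset.mem_coe] at hx
    obtain ⟨i, n, hn, rfl⟩ := hx
    exact hcompK i n hn
  · intro x hx
    simp only [Set.mem_iUnion, Set.mem_image] at hx
    obtain ⟨i, n, -, rfl⟩ := hx
    exact ⟨n, gcomp_mem 𝒜 d n (w i)⟩
  · apply le_antisymm
    · rw [Submodule.span_le]
      intro x hx
      simp only [Set.mem_iUnion, Set.mem_image, Finset.mem_coe] at hx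
      obtain ⟨i, n, hn, rfl⟩ := hx
      exact hcompK i n hn
    · rw [← hKspan]
      apply Submodule.span_le.mpr
      intro z hz
      have hz' : z ∈ Set.range w := hwZ' ▸ hz
      obtain ⟨i, rfl⟩ := hz'
      rw [SetLike.mem_coe, ← hNw i]
      apply Submodule.sum_mem
      intro n hn
      exact Submodule.subset_span (Set.mem_iUnion.mpr
        ⟨i, Set.mem_image_of_mem _ (Finset.mem_coe.mpr hn)⟩)
  · intro n
    apply Set.Finite.inter_of_left
    exact Set.finite_iUnion fun i => (Finset.finite_toSet _).image _
end
end
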